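/- Let c ≥ 4 and let T be the symmetric-noise class transition matrix with noise rate ρ ∈ (0, 1), i.e., T_{ii} = 1 − ρ for all i and T_{ij} = ρ/(c − 1) for i ≠ j. Then in the noisy-pair model the similarity noise rate is strictly lower than the class noise rate: P(H̄ ≠ H) < ρ. -/

import Mathlib

/- The probability of an event `A` (on quadruples `(i₁, j₁, i₂, j₂)` of clean/noisy class
labels for two independent points) in the noisy-pair model with class transition matrix `T`
and uniform class priors: each quadruple has probability `(1/c²) · T i₁ j₁ · T i₂ j₂`. -/
open Classical in
noncomputable def noisyPairProb (c : ℕ) (T : Matrix (Fin c) (Fin c) ℝ)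
    (A : Fin c → Fin c → Fin c → Fin c → Prop) : ℝ :=
  ∑ i₁ : Fin c, ∑ j₁ : Fin c, ∑ i₂ : Fin c, ∑ j₂ : Fin c,
    if A i₁ j₁ i₂ j₂ then (1 / (c : ℝ) ^ 2) * T i₁ j₁ * T i₂ j₂ else 0

/-- For symmetric noise with rate `ρ ∈ (0, 1)` and `c ≥ 4`, the similarity noise rate is
strictly lower than the class noise rate `ρ`. -/
theorem symmetric_simiNoise_lt (c : ℕ) (hc : 4 ≤ c) (ρ : ℝ) (hρ : 0 < ρ) (hρ1 : ρ < 1)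
    (T : Matrix (Fin c) (Fin c) ℝ)
    (hT : ∀ i j, T i j = if i = j then 1 - ρ else ρ / ((c : ℝ) - 1)) :
    noisyPairProb c T (fun i₁ j₁ i₂ j₂ => ¬ ((i₁ = i₂) ↔ (j₁ = j₂))) < ρ := by
  classical
  have hcR : (4:ℝ) ≤ (c:ℝ) := by exact_mod_cast hc
  have hc1 : (0:ℝ) < (c:ℝ) - 1 := by linarith
  have hc1' : ((c:ℝ) - 1) ≠ 0 := ne_of_gt hc1
  have hc0 : (0:ℝ) < (c:ℝ) := by linarith
  have hconst : ∀ (a b : ℝ) (i : Fin c),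
      (∑ j : Fin c, if i = j then a else b) = a + ((c:ℝ)-1)*b := by
    intro a b i
    have h1 : ∀ j : Fin c, (if i = j then a else b) = (if i = j then a - b else 0) + b := by
      intro j; split <;> ring
    simp only [h1, Finset.sum_add_distrib, Finset.sum_ite_eq, Finset.mem_univ, if_pos,
      Finset.sum_const, Finset.card_univ, Fintype.card_fin, nsmul_eq_mul]
    ring
  have hrow : ∀ i : Fin c, ∑ j : Fin c, T i j = 1 := by
    intro i
    simp only [hT, hconst]
    field_simp
    ring
  have hcol : ∀ j : Fin c, ∑ i : Fin c, T i j = 1 := by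
    intro j
    have h1 : ∀ i : Fin c, T i j = if j = i then 1 - ρ else ρ / ((c:ℝ)-1) := by
      intro i; rw [hT]
      by_cases h : i = j
      · simp [h]
      · simp [h, Ne.symm h]
    rw [Finset.sum_congr rfl fun i _ => h1 i, hconst]
    field_simp
    ring
  set q : ℝ := (1-ρ)^2 + ρ^2/((c:ℝ)-1) with hq
  have hsq : ∀ i : Fin c, ∑ j : Fin c, T i j * T i j = q := by
    intro i
    have h1 : ∀ j : Fin c, T i j * T i j
        = if i = j then (1-ρ)^2 else (ρ/((c:ℝ)-1))^2 := by
      intro j; rw [hT]; split <;> ring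
    rw [Finset.sum_congr rfl fun j _ => h1 j, hconst, hq]
    field_simp
  set k : ℝ := 1/(c:ℝ)^2 with hk
  have S1 : (∑ i₁ : Fin c, ∑ j₁ : Fin c, ∑ i₂ : Fin c, ∑ j₂ : Fin c,
      if i₁ = i₂ then k * T i₁ j₁ * T i₂ j₂ else 0) = 1/(c:ℝ) := by
    have h : ∀ i₁ j₁ : Fin c, (∑ i₂ : Fin c, ∑ j₂ : Fin c,
        if i₁ = i₂ then k * T i₁ j₁ * T i₂ j₂ else 0) = k * T i₁ j₁ := by
      intro i₁ j₁
      have h2 : ∀ i₂ : Fin c, (∑ j₂ : Fin c, if i₁ = i₂ then k * T i₁ j₁ * T i₂ j₂ else 0)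
          = if i₁ = i₂ then k * T i₁ j₁ else 0 := by
        intro i₂
        by_cases h : i₁ = i₂
        · simp only [h, if_true]
          rw [← Finset.mul_sum, hrow i₂, mul_one]
        · simp [h]
      rw [Finset.sum_congr rfl fun i₂ _ => h2 i₂, Finset.sum_ite_eq,
        if_pos (Finset.mem_univ i₁)]
    rw [Finset.sum_congr rfl fun i₁ _ =>
      (Finset.sum_congr rfl fun j₁ _ => h i₁ j₁)]
    have h3 : ∀ i₁ : Fin c, (∑ j₁ : Fin c, k * T i₁ j₁) = k := by
      intro i₁; rw [← Finset.mul_sum, hrow i₁, mul_one]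
    rw [Finset.sum_congr rfl fun i₁ _ => h3 i₁, Finset.sum_const, Finset.card_univ,
      Fintype.card_fin, nsmul_eq_mul, hk]
    field_simp
  have S2 : (∑ i₁ : Fin c, ∑ j₁ : Fin c, ∑ i₂ : Fin c, ∑ j₂ : Fin c,
      if j₁ = j₂ then k * T i₁ j₁ * T i₂ j₂ else 0) = 1/(c:ℝ) := by
    have h : ∀ i₁ j₁ : Fin c, (∑ i₂ : Fin c, ∑ j₂ : Fin c,
        if j₁ = j₂ then k * T i₁ j₁ * T i₂ j₂ else 0) = k * T i₁ j₁ := by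
      intro i₁ j₁
      have h2 : ∀ i₂ : Fin c, (∑ j₂ : Fin c, if j₁ = j₂ then k * T i₁ j₁ * T i₂ j₂ else 0)
          = k * T i₁ j₁ * T i₂ j₁ := by
        intro i₂
        rw [Finset.sum_ite_eq, if_pos (Finset.mem_univ j₁)]
      rw [Finset.sum_congr rfl fun i₂ _ => h2 i₂, ← Finset.mul_sum, hcol j₁, mul_one]
    rw [Finset.sum_congr rfl fun i₁ _ =>
      (Finset.sum_congr rfl fun j₁ _ => h i₁ j₁)]
    have h3 : ∀ i₁ : Fin c, (∑ j₁ : Fin c, k * T i₁ j₁) = k := by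
      intro i₁; rw [← Finset.mul_sum, hrow i₁, mul_one]
    rw [Finset.sum_congr rfl fun i₁ _ => h3 i₁, Finset.sum_const, Finset.card_univ,
      Fintype.card_fin, nsmul_eq_mul, hk]
    field_simp
  have S3 : (∑ i₁ : Fin c, ∑ j₁ : Fin c, ∑ i₂ : Fin c, ∑ j₂ : Fin c,
      if i₁ = i₂ ∧ j₁ = j₂ then k * T i₁ j₁ * T i₂ j₂ else 0) = q/(c:ℝ) := by
    have h : ∀ i₁ j₁ : Fin c, (∑ i₂ : Fin c, ∑ j₂ : Fin c,
        if i₁ = i₂ ∧ j₁ = j₂ then k * T i₁ j₁ * T i₂ j₂ else 0)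
        = k * T i₁ j₁ * T i₁ j₁ := by
      intro i₁ j₁
      have h2 : ∀ i₂ : Fin c, (∑ j₂ : Fin c,
          if i₁ = i₂ ∧ j₁ = j₂ then k * T i₁ j₁ * T i₂ j₂ else 0)
          = if i₁ = i₂ then k * T i₁ j₁ * T i₂ j₁ else 0 := by
        intro i₂
        by_cases h : i₁ = i₂
        · simp only [h, true_and, if_true]
          rw [Finset.sum_ite_eq, if_pos (Finset.mem_univ j₁)]
        · simp [h]
      rw [Finset.sum_congr rfl fun i₂ _ => h2 i₂, Finset.sum_ite_eq,
        if_pos (Finset.mem_univ i₁)]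
    rw [Finset.sum_congr rfl fun i₁ _ =>
      (Finset.sum_congr rfl fun j₁ _ => h i₁ j₁)]
    have h3 : ∀ i₁ : Fin c, (∑ j₁ : Fin c, k * T i₁ j₁ * T i₁ j₁) = k * q := by
      intro i₁
      have : ∀ j₁ : Fin c, k * T i₁ j₁ * T i₁ j₁ = k * (T i₁ j₁ * T i₁ j₁) := by
        intro j₁; ring
      rw [Finset.sum_congr rfl fun j₁ _ => this j₁, ← Finset.mul_sum, hsq i₁]
    rw [Finset.sum_congr rfl fun i₁ _ => h3 i₁, Finset.sum_const, Finset.card_univ,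
      Fintype.card_fin, nsmul_eq_mul, hk]
    field_simp
  have hpt : ∀ i₁ j₁ i₂ j₂ : Fin c,
      (@ite ℝ (¬((i₁ = i₂) ↔ (j₁ = j₂))) (Classical.propDecidable _)
        (k * T i₁ j₁ * T i₂ j₂) 0)
      = (if i₁ = i₂ then k * T i₁ j₁ * T i₂ j₂ else 0)
        + (if j₁ = j₂ then k * T i₁ j₁ * T i₂ j₂ else 0)
        - 2 * (if i₁ = i₂ ∧ j₁ = j₂ then k * T i₁ j₁ * T i₂ j₂ else 0) := by
    intro i₁ j₁ i₂ j₂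
    by_cases h1 : i₁ = i₂ <;> by_cases h2 : j₁ = j₂ <;>
      simp [h1, h2] <;> ring
  have hval : (∑ i₁ : Fin c, ∑ j₁ : Fin c, ∑ i₂ : Fin c, ∑ j₂ : Fin c,
      @ite ℝ (¬((i₁ = i₂) ↔ (j₁ = j₂))) (Classical.propDecidable _)
        (k * T i₁ j₁ * T i₂ j₂) 0)
      = 1/(c:ℝ) + 1/(c:ℝ) - 2 * (q/(c:ℝ)) := by
    refine (Finset.sum_congr rfl fun i₁ _ => Finset.sum_congr rfl fun j₁ _ =>
      Finset.sum_congr rfl fun i₂ _ => Finset.sum_congr rfl fun j₂ _ =>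
        hpt i₁ j₁ i₂ j₂).trans ?_
    simp only [Finset.sum_sub_distrib, Finset.sum_add_distrib, ← Finset.mul_sum]
    rw [S1, S2, S3]
  have hfinal : 1/(c:ℝ) + 1/(c:ℝ) - 2 * (q/(c:ℝ)) < ρ := by
    have hr : (0:ℝ) < ρ^2/((c:ℝ)-1) := div_pos (pow_pos hρ 2) hc1
    have key : 1/(c:ℝ) + 1/(c:ℝ) - 2*(q/(c:ℝ)) = (2 - 2*q)/(c:ℝ) := by ring
    rw [key, div_lt_iff₀ hc0, hq]
    have h4 : ρ * 4 ≤ ρ * (c:ℝ) := mul_le_mul_of_nonneg_left hcR (le_of_lt hρ)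
    nlinarith [sq_nonneg ρ, hr]
  rw [noisyPairProb, ← hk]
  exact lt_of_eq_of_lt hval hfinal
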